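/- Fix integers k, N with 1 ≤ k ≤ N−1, and let G be the domino-move graph: its vertices are the k×(N−k) partitions, with σ adjacent to τ if and only if τ − σ ∈ {2ε_j, −2ε_j : 1 ≤ j ≤ k} ∪ {ε_j + ε_{j+1}, −ε_j − ε_{j+1} : 1 ≤ j ≤ k−1}, or τ − σ = ±ε_1 with max(σ_1, τ_1) = N − k. Then G is connected: any k×(N−k) partition can be obtained from any other by a sequence of legal domino moves. -/

import Mathlib

/-- A `k × (N-k)` partition, presented as a 1-indexed integer sequence
`N - k ≥ σ 1 ≥ σ 2 ≥ ⋯ ≥ σ k ≥ 0` (with value `0` outside the indices `1, …, k`). -/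
def IsPart (k N : ℕ) (σ : ℕ → ℤ) : Prop :=
  (∀ i, (i = 0 ∨ k < i) → σ i = 0) ∧
  (∀ i, 1 ≤ i → i ≤ k → 0 ≤ σ i ∧ σ i ≤ (N : ℤ) - k) ∧
  (∀ i, 1 ≤ i → i < k → σ (i + 1) ≤ σ i)

/-- A legal domino move relates `σ` and `τ`: add/remove a horizontal domino
(`±2ε_j`), a vertical domino (`±(ε_j + ε_{j+1})`), or a single box in the
upper-right corner (`±ε_1` when the first row becomes or ceases to be full). -/
def DominoAdj (k N : ℕ) (σ τ : ℕ → ℤ) : Prop :=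
  (∃ j, 1 ≤ j ∧ j ≤ k ∧
    (τ = σ + Pi.single j (2 : ℤ) ∨ σ = τ + Pi.single j (2 : ℤ))) ∨
  (∃ j, 1 ≤ j ∧ j + 1 ≤ k ∧
    (τ = σ + Pi.single j (1 : ℤ) + Pi.single (j + 1) (1 : ℤ) ∨
      σ = τ + Pi.single j (1 : ℤ) + Pi.single (j + 1) (1 : ℤ))) ∨
  ((τ = σ + Pi.single 1 (1 : ℤ) ∨ σ = τ + Pi.single 1 (1 : ℤ)) ∧
    max (σ 1) (τ 1) = (N : ℤ) - k)

/-- The domino-move graph on `k × (N-k)` partitions. -/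
def dominoGraph (k N : ℕ) : SimpleGraph {σ : ℕ → ℤ // IsPart k N σ} where
  Adj σ τ := DominoAdj k N σ.val τ.val
  symm := by
    constructor
    rintro a b (⟨j, h1, h2, h3⟩ | ⟨j, h1, h2, h3⟩ | ⟨h3, h4⟩)
    · exact Or.inl ⟨j, h1, h2, h3.symm⟩
    · exact Or.inr <| Or.inl ⟨j, h1, h2, h3.symm⟩
    · exact Or.inr <| Or.inr ⟨h3.symm, by rw [max_comm]; exact h4⟩
  loopless := by
    constructor
    rintro a (⟨j, h1, h2, h3 | h3⟩ | ⟨j, h1, h2, h3 | h3⟩ | ⟨h3 | h3, h4⟩)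
    · have := congrFun h3 j; simp at this
    · have := congrFun h3 j; simp at this
    · have := congrFun h3 j; simp [Pi.single_apply] at this
    · have := congrFun h3 j; simp [Pi.single_apply] at this
    · have := congrFun h3 1; simp at this
    · have := congrFun h3 1; simp at this

namespace Stmt19

/-- The row partition `(m, 0, 0, …)`. -/
def rowP (m : ℤ) : ℕ → ℤ := fun i => if i = 1 then m else 0

lemma rowP_isPart (k N : ℕ) (hk : 1 ≤ k) (m : ℤ) (hm : 0 ≤ m) (hmd : m ≤ (N:ℤ) - k) :
    IsPart k N (rowP m) := by
  refine ⟨?_, ?_, ?_⟩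
  · intro i hi; simp only [rowP]; split_ifs with h
    · omega
    · rfl
  · intro i h1 h2; simp only [rowP]; split_ifs <;> constructor <;> linarith
  · intro i h1 h2; simp only [rowP]; split_ifs <;> omega

lemma rowP_add_two (m : ℤ) : rowP (m + 2) = rowP m + Pi.single 1 (2:ℤ) := by
  funext i
  by_cases h : i = 1 <;> simp [rowP, h, Pi.single_apply]

lemma rowP_add_one (m : ℤ) : rowP (m + 1) = rowP m + Pi.single 1 (1:ℤ) := by
  funext i
  by_cases h : i = 1 <;> simp [rowP, h, Pi.single_apply]

variable {k N : ℕ}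

/-- From `rowP m`, we can reach `rowP (m % 2)` by removing horizontal dominoes. -/
lemma row_reach (hk : 1 ≤ k) :
    ∀ m : ℕ, (m:ℤ) ≤ (N:ℤ) - k → ∀ (a b : {σ : ℕ → ℤ // IsPart k N σ}),
      a.1 = rowP m → b.1 = rowP ((m % 2 : ℕ)) → (dominoGraph k N).Reachable a b := by
  intro m
  induction m using Nat.strong_induction_on with
  | _ m ih =>
    intro hm a b ha hb
    by_cases hlt : m < 2
    · have h2 : m % 2 = m := Nat.mod_eq_of_lt hlt
      have : a = b := Subtype.ext (by rw [ha, hb, h2])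
      rw [this]
    · push_neg at hlt
      have hc : ((m - 2 : ℕ) : ℤ) = (m:ℤ) - 2 := by
        rw [Nat.cast_sub hlt]; norm_num
      have hpart : IsPart k N (rowP ((m - 2 : ℕ))) :=
        rowP_isPart k N hk _ (by positivity) (by rw [hc]; linarith)
      set c : {σ : ℕ → ℤ // IsPart k N σ} := ⟨rowP ((m - 2 : ℕ)), hpart⟩ with hcdef
      have hadj : (dominoGraph k N).Adj c a := by
        refine Or.inl ⟨1, le_refl 1, hk, Or.inl ?_⟩
        rw [ha, hcdef]
        show rowP (m:ℤ) = rowP ((m-2:ℕ)) + Pi.single 1 (2:ℤ)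
        rw [← rowP_add_two, hc]; ring_nf
      have hreach : (dominoGraph k N).Reachable c b := by
        have hmod : (m - 2) % 2 = m % 2 := by omega
        exact ih (m - 2) (by omega) (by rw [hc]; linarith) c b rfl (by rw [hb, hmod])
      exact (hadj.reachable.symm).trans hreach

/-- `rowP 0` and `rowP 1` are connected, via a path that fills the first row,
uses the corner move, and empties it again. -/
lemma zero_one (hk : 1 ≤ k) (hN : k + 1 ≤ N) :
    ∀ (a b : {σ : ℕ → ℤ // IsPart k N σ}),
      a.1 = rowP 0 → b.1 = rowP 1 → (dominoGraph k N).Reachable a b := by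
  intro a b ha hb
  have hNk : (k:ℤ) + 1 ≤ (N:ℤ) := by exact_mod_cast hN
  set dn : ℕ := N - k with hdn
  have hd1 : 1 ≤ dn := by omega
  have hdc : (dn : ℤ) = (N:ℤ) - k := by
    rw [hdn, Nat.cast_sub (by omega)]
  have hc1 : ((dn - 1 : ℕ):ℤ) = (dn:ℤ) - 1 := by
    rw [Nat.cast_sub hd1]; norm_num
  have hvd : IsPart k N (rowP (dn:ℤ)) := rowP_isPart k N hk _ (by positivity) (by omega)
  have hvd1 : IsPart k N (rowP ((dn - 1 : ℕ):ℤ)) :=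
    rowP_isPart k N hk _ (by positivity) (by rw [hc1]; omega)
  set vd : {σ : ℕ → ℤ // IsPart k N σ} := ⟨rowP (dn:ℤ), hvd⟩ with hvdd
  set vd1 : {σ : ℕ → ℤ // IsPart k N σ} := ⟨rowP ((dn - 1 : ℕ):ℤ), hvd1⟩ with hvd1d
  have hcorner : (dominoGraph k N).Adj vd1 vd := by
    refine Or.inr (Or.inr ⟨Or.inl ?_, ?_⟩)
    · show rowP (dn:ℤ) = rowP ((dn-1:ℕ):ℤ) + Pi.single 1 (1:ℤ)
      rw [← rowP_add_one, hc1]; ring_nf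
    · show max (rowP ((dn-1:ℕ):ℤ) 1) (rowP (dn:ℤ) 1) = (N:ℤ) - k
      simp only [rowP, ite_true, if_pos rfl]
      rw [hc1, hdc, max_eq_right (by linarith)]
  rcases Nat.even_or_odd dn with he | ho
  · have hm0 : dn % 2 = 0 := Nat.even_iff.mp he
    have hm1 : (dn - 1) % 2 = 1 := by omega
    have h1 : (dominoGraph k N).Reachable vd a :=
      row_reach hk dn (by omega) vd a rfl (by rw [ha, hm0]; norm_num)
    have h2 : (dominoGraph k N).Reachable vd1 b :=
      row_reach hk (dn - 1) (by rw [hc1]; omega) vd1 b rfl (by rw [hb, hm1]; norm_num)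
    exact h1.symm.trans (hcorner.reachable.symm.trans h2)
  · have hm1 : dn % 2 = 1 := Nat.odd_iff.mp ho
    have hm0 : (dn - 1) % 2 = 0 := by omega
    have h1 : (dominoGraph k N).Reachable vd1 a :=
      row_reach hk (dn - 1) (by rw [hc1]; omega) vd1 a rfl (by rw [ha, hm0]; norm_num)
    have h2 : (dominoGraph k N).Reachable vd b :=
      row_reach hk dn (by omega) vd b rfl (by rw [hb, hm1]; norm_num)
    exact h1.symm.trans (hcorner.reachable.trans h2)

end Stmt19
namespace Stmt19

variable {k N : ℕ}

/-- Every partition reaches `rowP 0` or `rowP 1` by removing dominoes. -/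
lemma reduce (hk : 1 ≤ k) (v0 v1 : {σ : ℕ → ℤ // IsPart k N σ})
    (h0 : v0.1 = rowP 0) (h1v : v1.1 = rowP 1) :
    ∀ n : ℕ, ∀ a : {σ : ℕ → ℤ // IsPart k N σ},
      (∑ i ∈ Finset.range (k+1), a.1 i) ≤ (n:ℤ) →
      (dominoGraph k N).Reachable a v0 ∨ (dominoGraph k N).Reachable a v1 := by
  intro n
  induction n with
  | zero =>
    intro a hS
    have hnn : ∀ i ∈ Finset.range (k+1), 0 ≤ a.1 i := by
      intro i _
      rcases Nat.eq_zero_or_pos i with h | h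
      · rw [a.2.1 i (Or.inl h)]
      rcases le_or_gt i k with h' | h'
      · exact (a.2.2.1 i h h').1
      · rw [a.2.1 i (Or.inr h')]
    have hz : ∀ i ∈ Finset.range (k+1), a.1 i = 0 := by
      rw [← Finset.sum_eq_zero_iff_of_nonneg hnn]
      have := Finset.sum_nonneg hnn
      omega
    have hav : a.1 = rowP 0 := by
      funext i
      have : rowP 0 i = 0 := by simp [rowP]
      rw [this]
      rcases le_or_gt i k with h' | h'
      · exact hz i (Finset.mem_range.mpr (by omega))
      · exact a.2.1 i (Or.inr h')
    exact Or.inl (by rw [Subtype.ext (hav.trans h0.symm)])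
  | succ n ih =>
    intro a hS
    classical
    set j := Nat.findGreatest (fun i : ℕ => a.1 i ≠ 0) k with hjdef
    by_cases hj0 : j = 0
    · have hall : ∀ m, 0 < m → m ≤ k → ¬ (a.1 m ≠ 0) := by
        rw [← Nat.findGreatest_eq_zero_iff (P := fun i : ℕ => a.1 i ≠ 0)]; exact hj0
      have hav : a.1 = rowP 0 := by
        funext i
        have h0' : rowP 0 i = 0 := by simp [rowP]
        rw [h0']
        rcases Nat.eq_zero_or_pos i with h | h
        · exact a.2.1 i (Or.inl h)
        rcases le_or_gt i k with h' | h'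
        · have := hall i h h'; push_neg at this; exact this
        · exact a.2.1 i (Or.inr h')
      exact Or.inl (by rw [Subtype.ext (hav.trans h0.symm)])
    · have hj1 : 1 ≤ j := Nat.one_le_iff_ne_zero.mpr hj0
      have hjk : j ≤ k := Nat.findGreatest_le (P := fun i : ℕ => a.1 i ≠ 0) k
      have hPj : a.1 j ≠ 0 := by
        have hex : ∃ m, 0 < m ∧ m ≤ k ∧ a.1 m ≠ 0 := by
          by_contra hcon
          push_neg at hcon
          exact hj0 ((Nat.findGreatest_eq_zero_iff (P := fun i : ℕ => a.1 i ≠ 0)).mpr (fun m h1 h2 h3 => h3 (hcon m h1 h2)))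
        obtain ⟨m, hm1, hm2, hm3⟩ := hex
        exact Nat.findGreatest_spec (P := fun i : ℕ => a.1 i ≠ 0) hm2 hm3
      have hzero : ∀ i, j < i → a.1 i = 0 := by
        intro i hi
        rcases le_or_gt i k with h' | h'
        · by_contra hcon
          exact Nat.findGreatest_is_greatest (P := fun i : ℕ => a.1 i ≠ 0) hi h' hcon
        · exact a.2.1 i (Or.inr h')
      have hja : 1 ≤ a.1 j := by
        have := (a.2.2.1 j hj1 hjk).1
        omega
      have hbd := a.2.2.1
      have hmono := a.2.2.2
      by_cases hc2 : 2 ≤ a.1 j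
      · -- remove a horizontal domino from row j
        set τ : ℕ → ℤ := fun i => if i = j then a.1 i - 2 else a.1 i with hτdef
        have hστ : a.1 = τ + Pi.single j (2:ℤ) := by
          funext i
          simp only [hτdef, Pi.add_apply, Pi.single_apply]
          split_ifs <;> omega
        have hτpart : IsPart k N τ := by
          refine ⟨?_, ?_, ?_⟩
          · intro i hi
            have hij : i ≠ j := by omega
            simp only [hτdef, if_neg hij]
            exact a.2.1 i hi
          · intro i ha1 ha2
            have hb1 := hbd i ha1 ha2
            by_cases h : i = j
            · subst h
              simp only [hτdef, if_pos rfl]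
              omega
            · simp only [hτdef, if_neg h]
              exact hb1
          · intro i ha1 ha2
            have hm := hmono i ha1 ha2
            by_cases h : i = j
            · subst h
              have h2 : j + 1 ≠ j := by omega
              have hza : a.1 (j+1) = 0 := hzero _ (by omega)
              simp only [hτdef, if_pos rfl, if_neg h2]
              omega
            · by_cases h' : i + 1 = j
              · simp only [hτdef, if_neg h, if_pos h']
                omega
              · simp only [hτdef, if_neg h, if_neg h']
                exact hm
        set b : {σ : ℕ → ℤ // IsPart k N σ} := ⟨τ, hτpart⟩ with hbdef
        have hadj : (dominoGraph k N).Adj b a := Or.inl ⟨j, hj1, hjk, Or.inl hστ⟩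
        have hsum : (∑ i ∈ Finset.range (k+1), a.1 i)
            = (∑ i ∈ Finset.range (k+1), τ i) + 2 := by
          rw [hστ]
          simp only [Pi.add_apply]
          rw [Finset.sum_add_distrib]
          congr 1
          simp only [Pi.single_apply]
          rw [Finset.sum_ite_eq' (Finset.range (k+1)) j (fun _ => (2:ℤ))]
          rw [if_pos (Finset.mem_range.mpr (by omega))]
        have hle : (∑ i ∈ Finset.range (k+1), τ i) ≤ (n:ℤ) := by
          push_cast at hS
          omega
        rcases ih b hle with h | h
        · exact Or.inl (hadj.reachable.symm.trans h)
        · exact Or.inr (hadj.reachable.symm.trans h)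
      · -- a.1 j = 1
        have hc1 : a.1 j = 1 := by omega
        by_cases hjone : j = 1
        · have hav : a.1 = rowP 1 := by
            funext i
            by_cases h : i = 1
            · rw [show rowP 1 i = 1 by simp [rowP, h]]
              have hij : i = j := by omega
              rw [hij]; exact hc1
            · rw [show rowP 1 i = 0 by simp [rowP, h]]
              rcases Nat.eq_zero_or_pos i with h' | h'
              · exact a.2.1 i (Or.inl h')
              · exact hzero i (by omega)
          exact Or.inr (by rw [Subtype.ext (hav.trans h1v.symm)])
        · -- remove a vertical domino from rows j-1, j
          have hj2 : 2 ≤ j := by omega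
          set l := j - 1 with hldef
          have hl1 : 1 ≤ l := by omega
          have hlj : l + 1 = j := by omega
          have hlk : l < k := by omega
          have hlj' : l ≠ j := by omega
          have hjl' : j ≠ l := by omega
          have haj : a.1 j ≤ a.1 l := by
            have := hmono l hl1 hlk
            rw [hlj] at this
            exact this
          set τ : ℕ → ℤ := fun i => if i = l then a.1 i - 1 else if i = j then a.1 i - 1 else a.1 i with hτdef
          have hστ : a.1 = τ + Pi.single l (1:ℤ) + Pi.single j (1:ℤ) := by
            funext i
            simp only [hτdef, Pi.add_apply, Pi.single_apply]
            split_ifs <;> omega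
          have hτpart : IsPart k N τ := by
            refine ⟨?_, ?_, ?_⟩
            · intro i hi
              have hil : i ≠ l := by omega
              have hij : i ≠ j := by omega
              simp only [hτdef, if_neg hil, if_neg hij]
              exact a.2.1 i hi
            · intro i ha1 ha2
              have hb1 := hbd i ha1 ha2
              by_cases h : i = l
              · subst h
                simp only [hτdef, if_pos rfl]
                omega
              · by_cases h' : i = j
                · subst h'
                  simp only [hτdef, if_neg h, if_pos rfl]
                  omega
                · simp only [hτdef, if_neg h, if_neg h']
                  exact hb1
            · intro i ha1 ha2
              have hm := hmono i ha1 ha2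
              by_cases h : i = l
              · -- i = l, i + 1 = j
                subst h
                have h2 : l + 1 ≠ l := by omega
                have hm' : a.1 (l+1) ≤ a.1 l := hm
                simp only [hτdef, if_neg h2, if_pos hlj, if_pos rfl]
                rw [hlj] at hm'
                omega
              · by_cases h' : i = j
                · subst h'
                  have h2 : j + 1 ≠ l := by omega
                  have h3 : j + 1 ≠ j := by omega
                  have hza : a.1 (j+1) = 0 := hzero _ (by omega)
                  simp only [hτdef, if_neg h2, if_neg h3, if_neg h, if_pos rfl]
                  omega
                · by_cases h2 : i + 1 = l
                  · have h3 : i + 1 ≠ j := by omega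
                    simp only [hτdef, if_pos h2, if_neg h, if_neg h']
                    omega
                  · by_cases h3 : i + 1 = j
                    · exact (h (by omega)).elim
                    · simp only [hτdef, if_neg h2, if_neg h3, if_neg h, if_neg h']
                      exact hm
          set b : {σ : ℕ → ℤ // IsPart k N σ} := ⟨τ, hτpart⟩ with hbdef
          have hadj : (dominoGraph k N).Adj b a := by
            refine Or.inr (Or.inl ⟨l, hl1, by omega, Or.inl ?_⟩)
            rw [hlj]
            exact hστ
          have hsum : (∑ i ∈ Finset.range (k+1), a.1 i)
              = (∑ i ∈ Finset.range (k+1), τ i) + 2 := by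
            rw [hστ]
            simp only [Pi.add_apply]
            rw [Finset.sum_add_distrib, Finset.sum_add_distrib]
            simp only [Pi.single_apply]
            rw [Finset.sum_ite_eq' (Finset.range (k+1)) l (fun _ => (1:ℤ)),
              Finset.sum_ite_eq' (Finset.range (k+1)) j (fun _ => (1:ℤ))]
            rw [if_pos (Finset.mem_range.mpr (by omega)), if_pos (Finset.mem_range.mpr (by omega))]
            ring
          have hle : (∑ i ∈ Finset.range (k+1), τ i) ≤ (n:ℤ) := by
            push_cast at hS
            omega
          rcases ih b hle with h | h
          · exact Or.inl (hadj.reachable.symm.trans h)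
          · exact Or.inr (hadj.reachable.symm.trans h)

end Stmt19
/-- Any `k × (N-k)` partition can be obtained from any other by a sequence of
legal domino moves: the domino-move graph is connected. -/
theorem stmt_19 (k N : ℕ) (hk : 1 ≤ k) (hkN : k ≤ N - 1) :
    (dominoGraph k N).Connected := by
  have hN : k + 1 ≤ N := by omega
  have hNk : (k:ℤ) + 1 ≤ (N:ℤ) := by exact_mod_cast hN
  have h0p : IsPart k N (Stmt19.rowP 0) :=
    Stmt19.rowP_isPart k N hk 0 le_rfl (by linarith)
  have h1p : IsPart k N (Stmt19.rowP 1) :=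
    Stmt19.rowP_isPart k N hk 1 (by norm_num) (by linarith)
  set v0 : {σ : ℕ → ℤ // IsPart k N σ} := ⟨Stmt19.rowP 0, h0p⟩ with hv0
  set v1 : {σ : ℕ → ℤ // IsPart k N σ} := ⟨Stmt19.rowP 1, h1p⟩ with hv1
  rw [SimpleGraph.connected_iff]
  refine ⟨?_, ⟨v0⟩⟩
  intro a b
  have z1 : (dominoGraph k N).Reachable v0 v1 :=
    Stmt19.zero_one hk hN v0 v1 rfl rfl
  have key : ∀ c, (dominoGraph k N).Reachable c v0 := by
    intro c
    have hSc : (∑ i ∈ Finset.range (k+1), c.1 i)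
        ≤ (((∑ i ∈ Finset.range (k+1), c.1 i).toNat : ℕ) : ℤ) := Int.self_le_toNat _
    rcases Stmt19.reduce hk v0 v1 rfl rfl _ c hSc with h | h
    · exact h
    · exact h.trans z1.symm
  exact (key a).trans (key b).symm
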